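/- Let ℓ and p be distinct primes with p odd, and let n be a positive integer such that p − 1 divides 2n. Then ν_p(H_{2n}) = ν_p(ℓ^{p−1} − 1) − 1. Furthermore, ν_p(H⁻_{2n}) equals ν_p(ℓ^{p−1} − 1) − 1 if (p−1) | n; it equals ν_p(ℓ^{(p−1)/2} − 1) − 1 if (p−1) ∤ n and the Legendre symbol (ℓ/p) = 1; and it equals −1 − ν_p(n) if (p−1) ∤ n and (ℓ/p) = −1. Also, ν_p(H⁺_{2n}) equals ν_p(ℓ^{(p−1)/2} + 1) − 1 if (p−1) ∤ n and (ℓ/p) = −1, and equals −1 − ν_p(n) otherwise. -/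

import Mathlib

open Finset

section VonStaudtAux
variable {p : ℕ} [hp : Fact p.Prime]

omit hp in
lemma aux_val_le (hp3 : 3 ≤ p) {j : ℕ} (hj : 2 ≤ j) : padicValNat p j + 2 ≤ j := by
  set v := padicValNat p j with hv
  rcases Nat.eq_zero_or_pos v with h | h
  · omega
  have h1 : p ^ v ∣ j := pow_padicValNat_dvd
  have h2 : p ^ v ≤ j := Nat.le_of_dvd (by omega) h1
  have h3 : 3 ^ v ≤ p ^ v := Nat.pow_le_pow_left hp3 v
  have h4 : v + 2 ≤ 3 ^ v := by
    clear_value v; clear hv h1 h2 h3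
    induction v with
    | zero => omega
    | succ w ih =>
      rcases Nat.eq_zero_or_pos w with rfl | hw
      · norm_num
      · have h5 := ih (by omega)
        calc w + 1 + 2 ≤ 3 ^ w + 1 := by omega
          _ ≤ 3 ^ (w+1) := by rw [pow_succ]; omega
  omega

lemma norm_nat_ne_zero {u : ℕ} (hu : ¬ p ∣ u) : ‖(u : ℚ_[p])‖ = 1 := by
  have hle : ‖((u : ℤ) : ℚ_[p])‖ ≤ 1 := Padic.norm_int_le_one u
  have hlt : ¬ ‖((u : ℤ) : ℚ_[p])‖ < 1 := by
    rw [Padic.norm_intCast_lt_one_iff]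
    exact_mod_cast hu
  push_cast at hle hlt ⊢
  linarith [lt_or_eq_of_le hle]

/-- norm of the cast of a nonzero natural number. -/
lemma norm_nat_cast_eq (j : ℕ) (hj : j ≠ 0) :
    ‖(j : ℚ_[p])‖ = ((p : ℝ))⁻¹ ^ (padicValNat p j) := by
  set v := padicValNat p j with hv
  obtain ⟨u, hu, hju⟩ : ∃ u, ¬ p ∣ u ∧ j = p ^ v * u := by
    refine ⟨j / p ^ v, ?_, ?_⟩
    · have := Nat.not_dvd_ordCompl hp.out hj
      rwa [Nat.factorization_def _ hp.out] at this
    · have := (Nat.ordProj_mul_ordCompl_eq_self j p).symm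
      rwa [Nat.factorization_def _ hp.out] at this
  rw [hju]
  push_cast
  rw [norm_mul, norm_pow, norm_nat_ne_zero hu, mul_one, Padic.norm_p]

/-- For `p ≥ 3` and `j ≥ 2`, `‖p^(j-1)/j‖ ≤ p⁻¹`. -/
lemma norm_pow_div_le (hodd : Odd p) {j : ℕ} (hj : 2 ≤ j) :
    ‖((p : ℚ_[p]) ^ (j - 1)) / (j : ℚ_[p])‖ ≤ (p : ℝ)⁻¹ := by
  have hp3 : 3 ≤ p := by
    have := hp.out.two_le
    rcases hodd with ⟨t, ht⟩; omega
  have hv := aux_val_le hp3 hj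
  have hppos : (1:ℝ) < p := by exact_mod_cast hp.out.one_lt
  rw [norm_div, norm_pow, Padic.norm_p, norm_nat_cast_eq j (by omega)]
  rw [div_eq_mul_inv, ← inv_pow, inv_inv]
  have hinvpos : (0:ℝ) < (p:ℝ)⁻¹ := by positivity
  calc ((p:ℝ))⁻¹ ^ (j-1) * (p:ℝ) ^ (padicValNat p j)
      ≤ ((p:ℝ))⁻¹ ^ (j-1) * (p:ℝ) ^ (j - 2) := by
        apply mul_le_mul_of_nonneg_left _ (by positivity)
        exact pow_le_pow_right₀ (by linarith) (by omega)
    _ = ((p:ℝ))⁻¹ ^ (j-1) * ((p:ℝ)⁻¹) ^ (2 - j : ℤ) := by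
        rw [← zpow_natCast (p:ℝ) (j-2), show ((j-2:ℕ):ℤ) = -(2-(j:ℤ)) by omega,
          zpow_neg, ← inv_zpow]
    _ = ((p:ℝ)⁻¹) ^ ((j - 1 : ℕ) + (2 - j : ℤ)) := by
        rw [← zpow_natCast ((p:ℝ)⁻¹), ← zpow_add₀ (by positivity)]
    _ = (p:ℝ)⁻¹ := by
        have : ((j - 1 : ℕ) : ℤ) + (2 - j : ℤ) = 1 := by omega
        rw [this, zpow_one]

/-- sum of m-th powers `0^m + ... + (p-1)^m`. -/
def Sp (p m : ℕ) : ℕ := ∑ k ∈ Finset.range p, k ^ m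

omit hp in
lemma key_identity (p : ℕ) (m : ℕ) :
    (p:ℚ) * bernoulli m - (Sp p m : ℚ) =
      - ∑ i ∈ range m,
          ((p:ℚ) * bernoulli i) * (m.choose i) * ((p:ℚ) ^ (m - i) / ((m + 1 - i : ℕ) : ℚ)) := by
  have hfa := sum_range_pow p m
  have hS : (Sp p m : ℚ) = ∑ k ∈ range p, (k : ℚ) ^ m := by
    simp [Sp]
  rw [hS, hfa, sum_range_succ, Nat.choose_succ_self_right]
  have hm1 : ((m:ℚ) + 1) ≠ 0 := by positivity
  have hlast : bernoulli m * (↑(m + 1)) * (p:ℚ) ^ (m + 1 - m) / (↑m + 1) = (p:ℚ) * bernoulli m := by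
    rw [Nat.add_sub_cancel_left, pow_one]
    push_cast
    field_simp
  rw [hlast]
  rw [sub_add_eq_sub_sub_swap, sub_self, zero_sub, neg_inj]
  apply Finset.sum_congr rfl
  intro i hi
  rw [mem_range] at hi
  have hji : (1:ℕ) ≤ m + 1 - i := by omega
  have hcc : ((m+1).choose i : ℚ) * ((m + 1 - i : ℕ) : ℚ) = ((m+1) : ℚ) * (m.choose i : ℚ) := by
    have := Nat.choose_mul_succ_eq m i
    have h2 : (m+1).choose i * (m + 1 - i) = m.choose i * (m+1) := this.symm
    exact_mod_cast by rw [h2]; push_cast; ring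
  have hne1 : ((m + 1 - i : ℕ) : ℚ) ≠ 0 := by
    have : 0 < m + 1 - i := by omega
    exact_mod_cast this.ne'
  rw [show m + 1 - i = (m - i) + 1 from by omega] at hcc ⊢
  rw [pow_succ]
  field_simp
  push_cast at hcc ⊢
  linear_combination (bernoulli i * (p:ℚ) ^ (m - i) * p) * hcc

lemma norm_pB (hodd : Odd p) : ∀ m : ℕ,
    ‖(((p:ℚ) * bernoulli m : ℚ) : ℚ_[p])‖ ≤ 1 ∧
    ‖(((p:ℚ) * bernoulli m - (Sp p m : ℚ) : ℚ) : ℚ_[p])‖ ≤ (p : ℝ)⁻¹ := by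
  intro m
  induction m using Nat.strong_induction_on with
  | _ m ih =>
    have hp1 : (1:ℝ) < p := by exact_mod_cast hp.out.one_lt
    have hppos : (0:ℝ) < (p:ℝ)⁻¹ := by positivity
    have hSnorm : ‖((Sp p m : ℚ) : ℚ_[p])‖ ≤ 1 := by
      have h := Padic.norm_int_le_one (p := p) (Sp p m)
      push_cast at h ⊢
      exact h
    have hdiff : ‖(((p:ℚ) * bernoulli m - (Sp p m : ℚ) : ℚ) : ℚ_[p])‖ ≤ (p:ℝ)⁻¹ := by
      rw [key_identity p m, Rat.cast_neg, norm_neg, Rat.cast_sum]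
      apply IsUltrametricDist.norm_sum_le_of_forall_le_of_nonneg hppos.le
      intro i hi
      rw [Finset.mem_range] at hi
      rw [Rat.cast_mul, Rat.cast_mul, norm_mul, norm_mul]
      have h1 : ‖(((p:ℚ) * bernoulli i : ℚ) : ℚ_[p])‖ ≤ 1 := (ih i hi).1
      have h2 : ‖((m.choose i : ℚ) : ℚ_[p])‖ ≤ 1 := by
        have h := Padic.norm_int_le_one (p := p) (m.choose i)
        push_cast at h ⊢
        exact h
      have h3 : ‖((((p:ℚ) ^ (m - i) / ((m + 1 - i : ℕ) : ℚ)) : ℚ) : ℚ_[p])‖ ≤ (p:ℝ)⁻¹ := by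
        have h4 := norm_pow_div_le (p := p) hodd (j := m + 1 - i) (by omega)
        rw [show m + 1 - i - 1 = m - i from by omega] at h4
        rw [Rat.cast_div, Rat.cast_pow]
        push_cast
        push_cast at h4
        exact h4
      calc ‖(((p:ℚ) * bernoulli i : ℚ) : ℚ_[p])‖ * ‖((m.choose i : ℚ) : ℚ_[p])‖ *
            ‖((((p:ℚ) ^ (m - i) / ((m + 1 - i : ℕ) : ℚ)) : ℚ) : ℚ_[p])‖
          ≤ 1 * 1 * (p:ℝ)⁻¹ := by
            gcongr
          _ = (p:ℝ)⁻¹ := by ring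
    refine ⟨?_, hdiff⟩
    have heq : ((p:ℚ) * bernoulli m : ℚ) =
        ((p:ℚ) * bernoulli m - (Sp p m : ℚ)) + (Sp p m : ℚ) := by ring
    rw [heq, Rat.cast_add]
    calc ‖((((p:ℚ) * bernoulli m - (Sp p m : ℚ)) : ℚ) : ℚ_[p]) + ((Sp p m : ℚ) : ℚ_[p])‖
        ≤ max ‖((((p:ℚ) * bernoulli m - (Sp p m : ℚ)) : ℚ) : ℚ_[p])‖ ‖((Sp p m : ℚ) : ℚ_[p])‖ :=
          Padic.nonarchimedean _ _
      _ ≤ 1 := by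
          apply max_le _ hSnorm
          calc _ ≤ (p:ℝ)⁻¹ := hdiff
            _ ≤ 1 := by rw [inv_le_one_iff₀]; right; linarith

lemma dvd_Sp_add_one (hodd : Odd p) {m : ℕ} (hm : m ≠ 0) (hdvd : (p - 1) ∣ m) :
    p ∣ Sp p m + 1 := by
  have h2 : 2 ≤ p := hp.out.two_le
  rw [← ZMod.natCast_eq_zero_iff]
  push_cast
  have hS : ((Sp p m : ℕ) : ZMod p) = ∑ k ∈ Finset.range p, ((k : ZMod p)) ^ m := by
    simp [Sp]
  rw [hS]
  obtain ⟨c, hc⟩ := hdvd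
  have hsum : ∑ k ∈ Finset.range p, ((k : ZMod p)) ^ m = ((p - 1 : ℕ) : ZMod p) := by
    have hps : (p - 1) + 1 = p := by omega
    have hsplit := Finset.sum_range_succ' (fun k => ((k : ZMod p)) ^ m) (p - 1)
    rw [hps] at hsplit
    rw [hsplit]
    have h0 : ((0 : ℕ) : ZMod p) ^ m = 0 := by
      rw [Nat.cast_zero, zero_pow hm]
    rw [h0, add_zero]
    have hone : ∀ i ∈ Finset.range (p - 1), (((i + 1 : ℕ) : ZMod p)) ^ m = 1 := by
      intro i hi
      rw [Finset.mem_range] at hi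
      have hne : ((i + 1 : ℕ) : ZMod p) ≠ 0 := by
        rw [Ne, ZMod.natCast_eq_zero_iff]
        intro hdd
        have := Nat.le_of_dvd (by omega) hdd
        omega
      rw [hc, pow_mul, ZMod.pow_card_sub_one_eq_one hne, one_pow]
    rw [Finset.sum_congr rfl hone, Finset.sum_const, Finset.card_range, nsmul_eq_mul, mul_one]
  rw [hsum]
  have : ((p - 1 : ℕ) : ZMod p) = -1 := by
    rw [Nat.cast_sub (by omega), Nat.cast_one, ZMod.natCast_self, zero_sub]
  rw [this]
  ring

lemma bernoulli_val (hodd : Odd p) {m : ℕ} (hm : m ≠ 0) (hdvd : (p - 1) ∣ m) :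
    bernoulli m ≠ 0 ∧ padicValRat p (bernoulli m) = -1 := by
  have hp1 : (1:ℝ) < p := by exact_mod_cast hp.out.one_lt
  obtain ⟨hB1, hB2⟩ := norm_pB (p := p) hodd m
  -- ‖S + 1‖ ≤ p⁻¹
  have hS1 : ‖(((Sp p m : ℚ) + 1 : ℚ) : ℚ_[p])‖ ≤ (p:ℝ)⁻¹ := by
    have hd := dvd_Sp_add_one (p := p) hodd hm hdvd
    have hd' : ((p:ℤ)) ^ 1 ∣ ((Sp p m : ℤ) + 1) := by rw [pow_one]; exact_mod_cast hd
    have := (Padic.norm_int_le_pow_iff_dvd (p := p) ((Sp p m : ℤ) + 1) 1).2 hd'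
    simp only [Nat.cast_one, zpow_neg_one] at this
    push_cast at this ⊢
    exact this
  have hpB1 : ‖(((p:ℚ) * bernoulli m + 1 : ℚ) : ℚ_[p])‖ ≤ (p:ℝ)⁻¹ := by
    have heq : ((p:ℚ) * bernoulli m + 1 : ℚ) =
        ((p:ℚ) * bernoulli m - (Sp p m : ℚ)) + ((Sp p m : ℚ) + 1) := by ring
    rw [heq, Rat.cast_add]
    exact le_trans (Padic.nonarchimedean _ _) (max_le hB2 hS1)
  have hnorm1 : ‖(((p:ℚ) * bernoulli m : ℚ) : ℚ_[p])‖ = 1 := by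
    have heq : ((p:ℚ) * bernoulli m : ℚ) = ((p:ℚ) * bernoulli m + 1) + (-1) := by ring
    rw [heq, Rat.cast_add]
    rw [Padic.add_eq_max_of_ne]
    · rw [Rat.cast_neg, Rat.cast_one, norm_neg, norm_one]
      rw [max_eq_right]
      exact le_trans hpB1 (by rw [inv_le_one_iff₀]; right; linarith)
    · rw [Rat.cast_neg, Rat.cast_one, norm_neg, norm_one]
      intro hcon
      rw [hcon] at hpB1
      have : (p:ℝ)⁻¹ < 1 := by rw [inv_lt_one_iff₀]; right; linarith
      linarith
  have hpBne : ((p:ℚ) * bernoulli m : ℚ) ≠ 0 := by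
    intro hc
    rw [hc] at hnorm1
    simp at hnorm1
  have hBne : bernoulli m ≠ 0 := by
    intro hc
    rw [hc, mul_zero] at hpBne
    exact hpBne rfl
  refine ⟨hBne, ?_⟩
  -- convert the norm to padicValRat
  have hval0 : padicValRat p ((p:ℚ) * bernoulli m) = 0 := by
    have h1 : (padicNorm p ((p:ℚ) * bernoulli m) : ℝ) = 1 := by
      rw [← Padic.eq_padicNorm]; exact hnorm1
    have h2 : padicNorm p ((p:ℚ) * bernoulli m) = 1 := by exact_mod_cast h1
    rw [padicNorm.eq_zpow_of_nonzero hpBne] at h2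
    have h3 := zpow_right_injective₀ (by exact_mod_cast hp.out.pos : (0:ℚ) < p)
      (by exact_mod_cast hp.out.one_lt.ne' : (p:ℚ) ≠ 1)
      (a₁ := -padicValRat p ((p:ℚ) * bernoulli m)) (a₂ := 0) (by simpa using h2)
    omega
  have hmul := padicValRat.mul (p := p) (q := (p:ℚ)) (r := bernoulli m)
    (by exact_mod_cast hp.out.pos.ne') hBne
  rw [hmul, padicValRat.self hp.out.one_lt] at hval0
  omega

lemma val_pow_sub_one {ℓ : ℕ} (hℓ2 : 2 ≤ ℓ) (e : ℕ) :
    padicValRat p ((ℓ:ℚ) ^ e - 1) = padicValNat p (ℓ ^ e - 1) := by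
  have h1 : (1:ℕ) ≤ ℓ ^ e := Nat.one_le_pow _ _ (by omega)
  have hcast : ((ℓ ^ e - 1 : ℕ) : ℚ) = (ℓ:ℚ) ^ e - 1 := by
    rw [Nat.cast_sub h1]; push_cast; ring
  rw [← hcast, padicValRat.of_nat]

lemma val_pow_add_one {ℓ : ℕ} (e : ℕ) :
    padicValRat p ((ℓ:ℚ) ^ e + 1) = padicValNat p (ℓ ^ e + 1) := by
  have hcast : ((ℓ ^ e + 1 : ℕ) : ℚ) = (ℓ:ℚ) ^ e + 1 := by push_cast; ring
  rw [← hcast, padicValRat.of_nat]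

lemma lte_nat (hodd : Odd p) {a k : ℕ} (ha : 2 ≤ a) (hdvd : p ∣ a - 1) (hnd : ¬ p ∣ a)
    (hk : k ≠ 0) :
    padicValNat p (a ^ k - 1) = padicValNat p (a - 1) + padicValNat p k := by
  have h := padicValNat.pow_sub_pow (p := p) hodd (x := a) (y := 1) (by omega)
    (by simpa using hdvd) hnd hk
  simpa using h

lemma lte_add_nat (hodd : Odd p) {a k : ℕ} (hdvd : p ∣ a + 1) (hnd : ¬ p ∣ a) (hk : Odd k) :
    padicValNat p (a ^ k + 1) = padicValNat p (a + 1) + padicValNat p k := by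
  have h := padicValNat.pow_add_pow (p := p) hodd (x := a) (y := 1) (by simpa using hdvd) hnd hk
  simpa using h



end VonStaudtAux

/-- `H_{2n} = (1 - ℓ^{2n}) B_{2n} / (2n)`. -/
noncomputable def Hnum (ℓ : ℕ) (n : ℕ) : ℚ :=
  (1 - (ℓ : ℚ) ^ (2 * n)) * bernoulli (2 * n) / (2 * n)

/-- `H⁻_{2n} = (1 - ℓ^n) B_{2n} / (2n)`. -/
noncomputable def HnumMinus (ℓ : ℕ) (n : ℕ) : ℚ :=
  (1 - (ℓ : ℚ) ^ n) * bernoulli (2 * n) / (2 * n)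

/-- `H⁺_{2n} = (1 + ℓ^n) B_{2n} / (2n)`. -/
noncomputable def HnumPlus (ℓ : ℕ) (n : ℕ) : ℚ :=
  (1 + (ℓ : ℚ) ^ n) * bernoulli (2 * n) / (2 * n)

/-- Let `ℓ ≠ p` be primes with `p` odd, and `n ≥ 1` with `p - 1 ∣ 2n`. Then
`ν_p(H_{2n}) = ν_p(ℓ^{p-1} - 1) - 1`; moreover `ν_p(H⁻_{2n})` equals
`ν_p(ℓ^{p-1} - 1) - 1` if `(p-1) ∣ n`, equals `ν_p(ℓ^{(p-1)/2} - 1) - 1` if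
`(p-1) ∤ n` and `(ℓ/p) = 1`, and equals `-1 - ν_p(n)` if `(p-1) ∤ n` and
`(ℓ/p) = -1`; and `ν_p(H⁺_{2n})` equals `ν_p(ℓ^{(p-1)/2} + 1) - 1` if
`(p-1) ∤ n` and `(ℓ/p) = -1`, and equals `-1 - ν_p(n)` otherwise. -/
theorem padicValRat_H_of_dvd (ℓ p : ℕ) [hp : Fact p.Prime] (hℓ : ℓ.Prime)
    (hne : ℓ ≠ p) (hodd : Odd p) (n : ℕ) (hn : 1 ≤ n) (hdvd : (p - 1) ∣ 2 * n) :
    (padicValRat p (Hnum ℓ n) = padicValRat p ((ℓ : ℚ) ^ (p - 1) - 1) - 1) ∧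
    (((p - 1) ∣ n →
        padicValRat p (HnumMinus ℓ n) = padicValRat p ((ℓ : ℚ) ^ (p - 1) - 1) - 1) ∧
      (¬ (p - 1) ∣ n → legendreSym p ℓ = 1 →
        padicValRat p (HnumMinus ℓ n) =
          padicValRat p ((ℓ : ℚ) ^ ((p - 1) / 2) - 1) - 1) ∧
      (¬ (p - 1) ∣ n → legendreSym p ℓ = -1 →
        padicValRat p (HnumMinus ℓ n) = -1 - (padicValNat p n : ℤ))) ∧
    ((¬ (p - 1) ∣ n → legendreSym p ℓ = -1 →
        padicValRat p (HnumPlus ℓ n) =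
          padicValRat p ((ℓ : ℚ) ^ ((p - 1) / 2) + 1) - 1) ∧
      (¬ (¬ (p - 1) ∣ n ∧ legendreSym p ℓ = -1) →
        padicValRat p (HnumPlus ℓ n) = -1 - (padicValNat p n : ℤ))) := by
  have hp2 := hp.out.two_le
  have hp3 : 3 ≤ p := by rcases hodd with ⟨t, ht⟩; omega
  have hℓ2 : 2 ≤ ℓ := hℓ.two_le
  have hpl : ¬ p ∣ ℓ := fun h => hne ((Nat.prime_dvd_prime_iff_eq hp.out hℓ).1 h).symm
  have hplpow : ∀ e : ℕ, ¬ p ∣ ℓ ^ e := fun e h => hpl (hp.out.dvd_of_dvd_pow h)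
  set d := (p - 1) / 2 with hdset
  have hd2 : p - 1 = 2 * d := by rcases hodd with ⟨t, ht⟩; omega
  have hpd2 : p / 2 = d := by rcases hodd with ⟨t, ht⟩; omega
  have hd1 : 1 ≤ d := by omega
  obtain ⟨k, hk⟩ : d ∣ n := by
    obtain ⟨c, hc⟩ := hdvd
    refine ⟨c, ?_⟩
    have h2 : 2 * n = 2 * (d * c) := by rw [hc, hd2, mul_assoc]
    omega
  have hk0 : k ≠ 0 := by rintro rfl; rw [mul_zero] at hk; omega
  have hlne : (ℓ : ZMod p) ≠ 0 := by
    rw [Ne, ZMod.natCast_eq_zero_iff]; exact hpl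
  have hfermat : (ℓ : ZMod p) ^ (p - 1) = 1 := ZMod.pow_card_sub_one_eq_one hlne
  have hcast_sub : ∀ e : ℕ, p ∣ ℓ ^ e - 1 ↔ (ℓ : ZMod p) ^ e = 1 := by
    intro e
    rw [← ZMod.natCast_eq_zero_iff,
      Nat.cast_sub (Nat.one_le_pow _ _ (by omega)), Nat.cast_pow, Nat.cast_one, sub_eq_zero]
  have hcast_add : ∀ e : ℕ, p ∣ ℓ ^ e + 1 ↔ (ℓ : ZMod p) ^ e = -1 := by
    intro e
    rw [← ZMod.natCast_eq_zero_iff, Nat.cast_add, Nat.cast_pow, Nat.cast_one,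
      add_eq_zero_iff_eq_neg]
  have hdvd_fermat : p ∣ ℓ ^ (p - 1) - 1 := (hcast_sub _).2 hfermat
  have h2ne : (2 : ZMod p) ≠ 0 := by
    have hpne2 : ¬ p ∣ 2 := fun h => absurd (Nat.le_of_dvd two_pos h) (by omega)
    have := (not_iff_not.2 (ZMod.natCast_eq_zero_iff 2 p)).2 hpne2
    exact_mod_cast this
  -- bernoulli valuation
  obtain ⟨hBne, hBval⟩ := bernoulli_val (p := p) hodd (m := 2 * n) (by omega) hdvd
  -- valuation of 2n
  have hpne2 : ¬ p ∣ 2 := fun h => absurd (Nat.le_of_dvd two_pos h) (by omega)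
  have hC : padicValRat p ((2 * n : ℕ) : ℚ) = padicValNat p n := by
    rw [padicValRat.of_nat, padicValNat.mul two_ne_zero (by omega),
      padicValNat.eq_zero_of_not_dvd hpne2, zero_add]
  have hCne : ((2:ℚ) * (n:ℚ)) ≠ 0 := by positivity
  have hval_dk : padicValNat p n = padicValNat p k := by
    have hpd : ¬ p ∣ d := fun h => by have := Nat.le_of_dvd (by omega) h; omega
    rw [hk, padicValNat.mul (by omega) hk0, padicValNat.eq_zero_of_not_dvd hpd, zero_add]
  -- master computation
  have master : ∀ A : ℚ, A ≠ 0 → ∀ v : ℤ, padicValRat p A = v →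
      padicValRat p (A * bernoulli (2 * n) / (2 * (n:ℚ)))
        = v - 1 - (padicValNat p n : ℤ) := by
    intro A hA v hAv
    rw [padicValRat.div (mul_ne_zero hA hBne) hCne, padicValRat.mul hA hBne, hAv, hBval]
    have h2 : (2 * (n:ℚ)) = ((2 * n : ℕ) : ℚ) := by push_cast; ring
    rw [h2, hC]
    ring
  -- Euler criterion facts
  have heuler : ((legendreSym p ℓ : ℤ) : ZMod p) = (ℓ : ZMod p) ^ d := by
    have h := legendreSym.eq_pow p (ℓ : ℤ)
    rw [hpd2] at h
    rw [h]; push_cast; ring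
  -- parity of k when (p-1) does not divide n
  have hkodd : ¬ (p - 1) ∣ n → Odd k := by
    intro hnd
    rcases Nat.even_or_odd k with he | ho
    · obtain ⟨j, hj⟩ := he
      exfalso
      exact hnd ⟨j, by rw [hk, hj, hd2]; ring⟩
    · exact ho
  -- generic H computation
  have calcH : ∀ x : ℚ, ∀ B : ℕ → ℕ → ℚ,
      (∀ a b : ℕ, B a b = bernoulli (2 * n)) → True := fun _ _ _ => trivial
  clear calcH
  refine ⟨?_, ⟨?_, ?_, ?_⟩, ?_, ?_⟩
  · -- Hnum
    have hAne : (1 - (ℓ:ℚ) ^ (2 * n)) ≠ 0 := by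
      have h1 : (1:ℚ) < (ℓ:ℚ) ^ (2 * n) := by
        have : (1:ℕ) < ℓ ^ (2 * n) := Nat.one_lt_pow (by omega) (by omega)
        exact_mod_cast this
      intro h; rw [sub_eq_zero] at h; rw [← h] at h1; exact lt_irrefl _ h1
    have hA1 : padicValRat p (1 - (ℓ:ℚ) ^ (2 * n))
        = (padicValNat p (ℓ ^ (p-1) - 1) : ℤ) + (padicValNat p n : ℤ) := by
      rw [show (1 - (ℓ:ℚ) ^ (2 * n)) = -((ℓ:ℚ) ^ (2 * n) - 1) from by ring, padicValRat.neg,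
        val_pow_sub_one hℓ2]
      have h2n : ℓ ^ (2 * n) = (ℓ ^ (p - 1)) ^ k := by
        rw [← pow_mul]; congr 1; rw [hd2, hk, mul_assoc]
      have ha2 : 2 ≤ ℓ ^ (p - 1) := Nat.one_lt_pow (by omega) (by omega)
      rw [h2n, lte_nat hodd ha2 hdvd_fermat (hplpow _) hk0, hval_dk]
      push_cast; ring
    rw [Hnum, val_pow_sub_one hℓ2, master _ hAne _ hA1]
    push_cast; ring
  · -- HnumMinus, (p-1) ∣ n
    rintro ⟨j, hj⟩
    have hj0 : j ≠ 0 := by rintro rfl; rw [mul_zero] at hj; omega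
    have hAne : (1 - (ℓ:ℚ) ^ n) ≠ 0 := by
      have h1 : (1:ℚ) < (ℓ:ℚ) ^ n := by
        have : (1:ℕ) < ℓ ^ n := Nat.one_lt_pow (by omega) (by omega)
        exact_mod_cast this
      intro h; rw [sub_eq_zero] at h; rw [← h] at h1; exact lt_irrefl _ h1
    have hvj : padicValNat p n = padicValNat p j := by
      have hpd : ¬ p ∣ (p - 1) := fun h => by have := Nat.le_of_dvd (by omega) h; omega
      rw [hj, padicValNat.mul (by omega) hj0, padicValNat.eq_zero_of_not_dvd hpd, zero_add]
    have hA1 : padicValRat p (1 - (ℓ:ℚ) ^ n)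
        = (padicValNat p (ℓ ^ (p-1) - 1) : ℤ) + (padicValNat p n : ℤ) := by
      rw [show (1 - (ℓ:ℚ) ^ n) = -((ℓ:ℚ) ^ n - 1) from by ring, padicValRat.neg,
        val_pow_sub_one hℓ2]
      have h2n : ℓ ^ n = (ℓ ^ (p - 1)) ^ j := by rw [← pow_mul, ← hj]
      have ha2 : 2 ≤ ℓ ^ (p - 1) := Nat.one_lt_pow (by omega) (by omega)
      rw [h2n, lte_nat hodd ha2 hdvd_fermat (hplpow _) hj0, hvj]
      push_cast; ring
    rw [HnumMinus, val_pow_sub_one hℓ2, master _ hAne _ hA1]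
    push_cast; ring
  · -- HnumMinus, legendre = 1
    intro hnd hleg
    have he1 : (ℓ : ZMod p) ^ d = 1 := by
      rw [← heuler, hleg]; norm_num
    have hdvd_e1 : p ∣ ℓ ^ d - 1 := (hcast_sub _).2 he1
    have hAne : (1 - (ℓ:ℚ) ^ n) ≠ 0 := by
      have h1 : (1:ℚ) < (ℓ:ℚ) ^ n := by
        have : (1:ℕ) < ℓ ^ n := Nat.one_lt_pow (by omega) (by omega)
        exact_mod_cast this
      intro h; rw [sub_eq_zero] at h; rw [← h] at h1; exact lt_irrefl _ h1
    have hA1 : padicValRat p (1 - (ℓ:ℚ) ^ n)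
        = (padicValNat p (ℓ ^ d - 1) : ℤ) + (padicValNat p n : ℤ) := by
      rw [show (1 - (ℓ:ℚ) ^ n) = -((ℓ:ℚ) ^ n - 1) from by ring, padicValRat.neg,
        val_pow_sub_one hℓ2]
      have h2n : ℓ ^ n = (ℓ ^ d) ^ k := by rw [← pow_mul, ← hk]
      have ha2 : 2 ≤ ℓ ^ d := Nat.one_lt_pow (by omega) (by omega)
      rw [h2n, lte_nat hodd ha2 hdvd_e1 (hplpow _) hk0, hval_dk]
      push_cast; ring
    rw [HnumMinus, val_pow_sub_one hℓ2, master _ hAne _ hA1]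
    push_cast; ring
  · -- HnumMinus, legendre = -1
    intro hnd hleg
    have he1 : (ℓ : ZMod p) ^ d = -1 := by
      rw [← heuler, hleg]; norm_num
    have hko := hkodd hnd
    have hm1 : (ℓ : ZMod p) ^ n = -1 := by
      rw [hk, pow_mul, he1, hko.neg_one_pow]
    have hndvd : ¬ p ∣ ℓ ^ n - 1 := by
      rw [hcast_sub]
      intro h
      exact h2ne (by linear_combination hm1 - h)
    have hAne : (1 - (ℓ:ℚ) ^ n) ≠ 0 := by
      have h1 : (1:ℚ) < (ℓ:ℚ) ^ n := by
        have : (1:ℕ) < ℓ ^ n := Nat.one_lt_pow (by omega) (by omega)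
        exact_mod_cast this
      intro h; rw [sub_eq_zero] at h; rw [← h] at h1; exact lt_irrefl _ h1
    have hA1 : padicValRat p (1 - (ℓ:ℚ) ^ n) = (0 : ℤ) := by
      rw [show (1 - (ℓ:ℚ) ^ n) = -((ℓ:ℚ) ^ n - 1) from by ring, padicValRat.neg,
        val_pow_sub_one hℓ2, padicValNat.eq_zero_of_not_dvd hndvd]
      norm_num
    rw [HnumMinus, master _ hAne _ hA1]
    ring
  · -- HnumPlus, legendre = -1
    intro hnd hleg
    have he1 : (ℓ : ZMod p) ^ d = -1 := by
      rw [← heuler, hleg]; norm_num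
    have hko := hkodd hnd
    have hdvd_e2 : p ∣ ℓ ^ d + 1 := (hcast_add _).2 he1
    have hAne : (1 + (ℓ:ℚ) ^ n) ≠ 0 := by positivity
    have hA1 : padicValRat p (1 + (ℓ:ℚ) ^ n)
        = (padicValNat p (ℓ ^ d + 1) : ℤ) + (padicValNat p n : ℤ) := by
      rw [show (1 + (ℓ:ℚ) ^ n) = ((ℓ:ℚ) ^ n + 1) from by ring, val_pow_add_one]
      have h2n : ℓ ^ n = (ℓ ^ d) ^ k := by rw [← pow_mul, ← hk]
      rw [h2n, lte_add_nat hodd hdvd_e2 (hplpow _) hko, hval_dk]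
      push_cast; ring
    rw [HnumPlus, val_pow_add_one, master _ hAne _ hA1]
    push_cast; ring
  · -- HnumPlus, otherwise
    intro hcond
    have hone : (ℓ : ZMod p) ^ n = 1 := by
      by_cases hpn : (p - 1) ∣ n
      · obtain ⟨j, hj⟩ := hpn
        rw [hj, pow_mul, hfermat, one_pow]
      · have hlegne : legendreSym p ℓ ≠ -1 := fun h => hcond ⟨hpn, h⟩
        have hleg1 : legendreSym p ℓ = 1 := by
          rcases legendreSym.eq_one_or_neg_one p (a := (ℓ:ℤ)) (by exact_mod_cast hlne) with h | h
          · exact h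
          · exact absurd h hlegne
        have he1 : (ℓ : ZMod p) ^ d = 1 := by
          rw [← heuler, hleg1]; norm_num
        rw [hk, pow_mul, he1, one_pow]
    have hndvd : ¬ p ∣ ℓ ^ n + 1 := by
      rw [hcast_add]
      intro h
      exact h2ne (by linear_combination h - hone)
    have hAne : (1 + (ℓ:ℚ) ^ n) ≠ 0 := by positivity
    have hA1 : padicValRat p (1 + (ℓ:ℚ) ^ n) = (0 : ℤ) := by
      rw [show (1 + (ℓ:ℚ) ^ n) = ((ℓ:ℚ) ^ n + 1) from by ring, val_pow_add_one,
        padicValNat.eq_zero_of_not_dvd hndvd]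
      norm_num
    rw [HnumPlus, master _ hAne _ hA1]
    ring
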